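/- Let {(X, h_i)}_{i=1}^∞ be a sequence of representable polymatroids on a finite ground set X and {c_i}_{i=1}^∞ positive reals such that c_i·h_i converges coordinatewise to a rank function h_0. Let 0 ≤ ε ≤ h_0(X). For each i define g_i(A) := min(c_i·h_i(A), c_i·h_i(X) − ε) and define g_0(A) := min(h_0(A), h_0(X) − ε). Then g_i converges coordinatewise to g_0, and g_0 is almost representable. -/

import Mathlib

open Module Filter Topology

/-- A representation of a rank function on ground set `X` by subspaces of a
finite-dimensional vector space `W` over a finite field `F`. -/
structure SubspaceRep {X : Type} (h : Finset X → ℝ) where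
  F : Type
  W : Type
  [fieldF : Field F]
  [fintypeF : Fintype F]
  [addCommGroupW : AddCommGroup W]
  [moduleW : Module F W]
  [finiteDimensionalW : FiniteDimensional F W]
  V : X → Submodule F W
  rank_eq : ∀ A : Finset X, h A = (Module.finrank F ↥(A.sup V) : ℝ)

/-- `h` is representable: it is `q`-representable for some prime power `q`
(equivalently, it is given by subspace dimensions over some finite field). -/
def IsRepresentable {X : Type} (h : Finset X → ℝ) : Prop := Nonempty (SubspaceRep h)

/-- `h` is even representable: `2^m`-representable for some positive integer `m`. -/
def EvenRepresentable {X : Type} (h : Finset X → ℝ) : Prop :=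
  ∃ (r : SubspaceRep h) (m : ℕ), 0 < m ∧ Nat.card r.F = 2 ^ m

/-- `h` is odd representable: `p^m`-representable for some odd prime `p` and positive `m`. -/
def OddRepresentable {X : Type} (h : Finset X → ℝ) : Prop :=
  ∃ (r : SubspaceRep h) (p m : ℕ), p.Prime ∧ Odd p ∧ 0 < m ∧ Nat.card r.F = p ^ m

/-- Polymatroid axioms: normalization, nonnegativity, monotonicity, submodularity. -/
def IsPolymatroid {X : Type} [DecidableEq X] (h : Finset X → ℝ) : Prop :=
  h ∅ = 0 ∧ (∀ A, 0 ≤ h A) ∧ (∀ A B : Finset X, A ⊆ B → h A ≤ h B) ∧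
    ∀ A B : Finset X, h (A ∪ B) + h (A ∩ B) ≤ h A + h B

/-- The Ingleton expression `J_h(A1,A2,A3,A4)`. -/
noncomputable def ingletonJ {X : Type} [DecidableEq X] (h : Finset X → ℝ)
    (A1 A2 A3 A4 : Finset X) : ℝ :=
  h (A1 ∪ A2) + h (A1 ∪ A3) + h (A1 ∪ A4) + h (A2 ∪ A3) + h (A2 ∪ A4)
    - h A1 - h A2 - h (A3 ∪ A4) - h (A1 ∪ A2 ∪ A3) - h (A1 ∪ A2 ∪ A4)

/-- `h` is Ingletonian if all Ingleton expressions are nonnegative. -/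
def IsIngletonian {X : Type} [DecidableEq X] (h : Finset X → ℝ) : Prop :=
  ∀ A1 A2 A3 A4 : Finset X, 0 ≤ ingletonJ h A1 A2 A3 A4

/-- The convex cone generated by a set `S` of rank functions (viewed as points of
`ℝ^{2^|X|}`): all finite nonnegative combinations of elements of `S`. -/
def coneHull {X : Type} (S : Set (Finset X → ℝ)) : Set (Finset X → ℝ) :=
  {x | ∃ (m : ℕ) (c : Fin m → ℝ) (f : Fin m → Finset X → ℝ),
    (∀ i, 0 ≤ c i) ∧ (∀ i, f i ∈ S) ∧ x = ∑ i, c i • f i}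

/-- `h` is almost representable: a coordinatewise limit `h = lim_i c_i g_i` with
`c_i > 0` and each `g_i` representable. -/
def AlmostRepresentable {X : Type} (h : Finset X → ℝ) : Prop :=
  ∃ (g : ℕ → Finset X → ℝ) (c : ℕ → ℝ), (∀ i, IsRepresentable (g i)) ∧
    (∀ i, 0 < c i) ∧ ∀ A : Finset X, Tendsto (fun i => c i * g i A) atTop (𝓝 (h A))

/-- `h` is almost even representable. -/
def AlmostEvenRepresentable {X : Type} (h : Finset X → ℝ) : Prop :=
  ∃ (g : ℕ → Finset X → ℝ) (c : ℕ → ℝ), (∀ i, EvenRepresentable (g i)) ∧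
    (∀ i, 0 < c i) ∧ ∀ A : Finset X, Tendsto (fun i => c i * g i A) atTop (𝓝 (h A))

/-- `h` is almost odd representable. -/
def AlmostOddRepresentable {X : Type} (h : Finset X → ℝ) : Prop :=
  ∃ (g : ℕ → Finset X → ℝ) (c : ℕ → ℝ), (∀ i, OddRepresentable (g i)) ∧
    (∀ i, 0 < c i) ∧ ∀ A : Finset X, Tendsto (fun i => c i * g i A) atTop (𝓝 (h A))

/-- `h` is cc-representable: it lies in the closure of the convex cone generated by
the set `Υ[X]` of representable rank functions on `X`. -/
def CcRepresentable {X : Type} (h : Finset X → ℝ) : Prop :=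
  h ∈ closure (coneHull {g : Finset X → ℝ | IsRepresentable g})

/-- A matroid: an integer-valued polymatroid with `h(A) ≤ |A|`. -/
def IsIntMatroid {X : Type} [DecidableEq X] (h : Finset X → ℝ) : Prop :=
  IsPolymatroid h ∧ (∀ A : Finset X, ∃ z : ℤ, h A = (z : ℝ)) ∧ ∀ A : Finset X, h A ≤ A.card

/-- A circuit of a matroid: a minimal dependent set. -/
def IsCircuit {X : Type} (h : Finset X → ℝ) (C : Finset X) : Prop :=
  h C < C.card ∧ ∀ D : Finset X, D ⊂ C → h D = D.card

/-- A connected matroid: every pair of distinct elements lies in a common circuit. -/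
def IsConnectedMatroid {X : Type} [DecidableEq X] (h : Finset X → ℝ) : Prop :=
  IsIntMatroid h ∧ ∀ x y : X, x ≠ y → ∃ C : Finset X, IsCircuit h C ∧ x ∈ C ∧ y ∈ C


section AuxLemmas
open Polynomial TensorProduct


lemma map_finsetSup {X F W W₂ : Type} [DecidableEq X] [Field F] [AddCommGroup W]
    [Module F W] [AddCommGroup W₂] [Module F W₂] (f : W →ₗ[F] W₂) (A : Finset X)
    (V : X → Submodule F W) :
    Submodule.map f (A.sup V) = A.sup (fun i => (V i).map f) := by
  induction A using Finset.induction_on with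
  | empty => simp
  | insert _ _ hx ih => rw [Finset.sup_insert, Finset.sup_insert, Submodule.map_sup, ih]

noncomputable def piSubEquiv {F W : Type} [Field F] [AddCommGroup W] [Module F W]
    (M : ℕ) (S : Submodule F W) :
    ↥(Submodule.pi Set.univ (fun _ : Fin M => S)) ≃ₗ[F] (Fin M → ↥S) where
  toFun x := fun i => ⟨x.1 i, x.2 i trivial⟩
  invFun y := ⟨fun i => y i, fun i _ => (y i).2⟩
  left_inv x := rfl
  right_inv y := rfl
  map_add' x y := rfl
  map_smul' c x := rfl

lemma rep_nsmul {X : Type} [Fintype X] [DecidableEq X] {h : Finset X → ℝ}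
    (r : SubspaceRep h) (M : ℕ) : IsRepresentable (fun A => (M : ℝ) * h A) := by
  classical
  letI := r.fieldF; letI := r.fintypeF; letI := r.addCommGroupW; letI := r.moduleW
  letI := r.finiteDimensionalW
  set V' : X → Submodule r.F (Fin M → r.W) :=
    fun i => Submodule.pi Set.univ (fun _ => r.V i) with hV'
  have hsup : ∀ A : Finset X, A.sup V' = Submodule.pi Set.univ (fun _ => A.sup r.V) := by
    intro A
    apply le_antisymm
    · exact Finset.sup_le fun i hi => Submodule.pi_mono fun j _ => Finset.le_sup hi
    · intro x hx
      rw [Submodule.mem_pi] at hx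
      have hx' : x = ∑ j, Pi.single j (x j) := (Finset.univ_sum_single x).symm
      rw [hx']
      refine Submodule.sum_mem _ fun j _ => ?_
      have h1 : Submodule.map (LinearMap.single r.F (fun _ : Fin M => r.W) j) (A.sup r.V)
          ≤ A.sup V' := by
        rw [map_finsetSup]
        refine Finset.sup_mono_fun fun i _ => ?_
        rintro - ⟨v, hv, rfl⟩
        rw [hV']
        intro k _
        simp only [LinearMap.coe_single, Pi.single_apply]
        split_ifs
        · exact hv
        · exact Submodule.zero_mem _
      exact h1 ⟨x j, hx j trivial, rfl⟩
  have hre : ∀ A : Finset X, (M : ℝ) * h A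
      = (Module.finrank r.F ↥(A.sup V') : ℝ) := by
    intro A
    rw [hsup A, r.rank_eq A, LinearEquiv.finrank_eq (piSubEquiv M (A.sup r.V)),
      Module.finrank_pi_fintype]
    push_cast [Finset.sum_const, Finset.card_univ, Fintype.card_fin, smul_eq_mul]
    ring
  exact ⟨{ F := r.F
           W := (Fin M → r.W)
           V := V'
           rank_eq := hre }⟩

lemma rep_mono {X : Type} [DecidableEq X] {h : Finset X → ℝ} (r : SubspaceRep h)
    {A B : Finset X} (hAB : A ⊆ B) : h A ≤ h B := by
  letI := r.fieldF; letI := r.addCommGroupW; letI := r.moduleW; letI := r.finiteDimensionalW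
  rw [r.rank_eq A, r.rank_eq B]
  exact_mod_cast Submodule.finrank_mono (Finset.sup_mono hAB)

section BaseChange
variable {F F' W : Type} [Field F] [Field F'] [Algebra F F']
  [AddCommGroup W] [Module F W]

lemma myBaseChange_mono {p q : Submodule F W} (h : p ≤ q) :
    p.baseChange F' ≤ q.baseChange F' := by
  rw [Submodule.baseChange_eq_span, Submodule.baseChange_eq_span]
  exact Submodule.span_mono (Set.image_mono h)

lemma myBaseChange_sup (p q : Submodule F W) :
    (p ⊔ q).baseChange F' = p.baseChange F' ⊔ q.baseChange F' := by
  apply le_antisymm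
  · rw [Submodule.baseChange_eq_span, Submodule.span_le]
    rintro - ⟨m, hm, rfl⟩
    obtain ⟨y, hy, z, hz, rfl⟩ := Submodule.mem_sup.mp hm
    have : (TensorProduct.mk F F' W 1) (y + z)
        = (TensorProduct.mk F F' W 1) y + (TensorProduct.mk F F' W 1) z := by
      simp [TensorProduct.tmul_add]
    rw [this]
    exact Submodule.add_mem _
      (Submodule.mem_sup_left (Submodule.tmul_mem_baseChange_of_mem 1 hy))
      (Submodule.mem_sup_right (Submodule.tmul_mem_baseChange_of_mem 1 hz))
  · exact sup_le (myBaseChange_mono le_sup_left) (myBaseChange_mono le_sup_right)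

lemma myBaseChange_finsetSup {X : Type} [DecidableEq X] (A : Finset X)
    (V : X → Submodule F W) :
    A.sup (fun i => (V i).baseChange F') = (A.sup V).baseChange F' := by
  induction A using Finset.induction_on with
  | empty => simp
  | insert _ _ hx ih => rw [Finset.sup_insert, Finset.sup_insert, ih, myBaseChange_sup]

lemma myBaseChange_eq_range (p : Submodule F W) :
    p.baseChange F' = LinearMap.range (p.subtype.baseChange F') := by
  apply le_antisymm
  · rw [Submodule.baseChange_eq_span, Submodule.span_le]
    rintro - ⟨m, hm, rfl⟩
    refine LinearMap.mem_range.mpr ⟨(1 : F') ⊗ₜ ⟨m, hm⟩, ?_⟩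
    simp [TensorProduct.mk]
  · rintro - ⟨y, rfl⟩
    induction y using TensorProduct.induction_on with
    | zero => simp
    | tmul a m => simpa using Submodule.tmul_mem_baseChange_of_mem a m.2
    | add u v hu hv => rw [map_add]; exact Submodule.add_mem _ hu hv

lemma myBaseChange_finrank (p : Submodule F W) [FiniteDimensional F W] :
    finrank F' (p.baseChange F') = finrank F p := by
  have hinj : Function.Injective (p.subtype.baseChange F') := by
    have := Module.Flat.lTensor_preserves_injective_linearMap
      (M := F') (R := F) p.subtype p.injective_subtype
    rwa [← LinearMap.baseChange_eq_ltensor] at this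
  rw [myBaseChange_eq_range]
  rw [← LinearEquiv.finrank_eq (LinearEquiv.ofInjective _ hinj)]
  exact Module.finrank_baseChange

end BaseChange

lemma not_covered {F V : Type} [Field F] [Fintype F] [AddCommGroup V]
    [Module F V] [FiniteDimensional F V] (T : Finset (Submodule F V))
    (hT : ∀ U ∈ T, U ≠ ⊤) (hcard : T.card < Fintype.card F) :
    ∃ x : V, ∀ U ∈ T, x ∉ U := by
  classical
  haveI : Finite V := Module.finite_of_finite F
  haveI : Fintype V := Fintype.ofFinite V
  by_cases hd : finrank F V = 0
  · have : Subsingleton V := finrank_zero_iff.mp hd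
    have hTe : T = ∅ := Finset.eq_empty_of_forall_notMem fun U hU =>
      hT U hU (Subsingleton.elim U ⊤)
    exact ⟨0, by simp [hTe]⟩
  set d := finrank F V with hdd
  set q := Fintype.card F with hq
  have hq0 : 0 < q := Fintype.card_pos
  let S : Finset V := T.biUnion fun U => (U : Set V).toFinset
  have hUcard : ∀ U ∈ T, ((U : Set V).toFinset).card ≤ q ^ (d - 1) := by
    intro U hU
    have h1 : finrank F U < d := Submodule.finrank_lt (hT U hU)
    have h2 : finrank F U ≤ d - 1 := Nat.le_sub_one_of_lt h1
    rw [Set.toFinset_card]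
    calc Fintype.card U = q ^ finrank F U := card_eq_pow_finrank
      _ ≤ q ^ (d - 1) := Nat.pow_le_pow_right hq0 h2
  have hScard : S.card < Fintype.card V := by
    calc S.card ≤ ∑ U ∈ T, ((U : Set V).toFinset).card := Finset.card_biUnion_le
      _ ≤ T.card * q ^ (d - 1) := by
          calc ∑ U ∈ T, ((U : Set V).toFinset).card ≤ ∑ _U ∈ T, q ^ (d - 1) :=
                Finset.sum_le_sum hUcard
            _ = T.card * q ^ (d - 1) := by rw [Finset.sum_const, smul_eq_mul]
      _ < q * q ^ (d - 1) :=
          Nat.mul_lt_mul_of_lt_of_le hcard le_rfl (Nat.pow_pos hq0)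
      _ = q ^ d := by rw [← pow_succ']; congr 1; omega
      _ = Fintype.card V := (card_eq_pow_finrank (K := F) (V := V)).symm
  have hSc : Sᶜ.Nonempty := by
    rw [← Finset.card_pos, Finset.card_compl]
    omega
  obtain ⟨x, hx⟩ := hSc
  rw [Finset.mem_compl] at hx
  exact ⟨x, fun U hU hxU => hx (Finset.mem_biUnion.mpr ⟨U, hU, Set.mem_toFinset.mpr hxU⟩)⟩

lemma exists_big_ext (F : Type) [Field F] [Fintype F] (N : ℕ) :
    ∃ (F' : Type) (_ : Field F') (_ : Fintype F') (_ : Algebra F F'),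
      N < Fintype.card F' := by
  classical
  set p := ringChar F with hp
  haveI hfact : Fact p.Prime := ⟨CharP.char_is_prime F p⟩
  set e := N + 1 with he
  set g : F[X] := X ^ (p ^ e) - X with hg
  have hp2 : 2 ≤ p := hfact.out.two_le
  have hpe : 2 ≤ p ^ e := le_trans hp2 (Nat.le_self_pow (by omega) p)
  have hgdeg : g.natDegree = p ^ e := by
    rw [hg]
    compute_degree!
    · rw [if_neg (by omega)]; norm_num
    · omega
  have hgsep : g.Separable := by
    haveI : CharP F p := ringChar.charP F
    exact galois_poly_separable p (p ^ e) (dvd_pow_self p (by omega))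
  set F' := g.SplittingField with hF'
  haveI : FiniteDimensional F F' := by infer_instance
  haveI : Finite F' := Module.finite_of_finite F
  haveI : Fintype F' := Fintype.ofFinite F'
  refine ⟨F', inferInstance, inferInstance, inferInstance, ?_⟩
  have hsplit : Splits (g.map (algebraMap F F')) := SplittingField.splits g
  have hcard : Fintype.card (g.rootSet F') = g.natDegree :=
    card_rootSet_eq_natDegree hgsep hsplit
  have hle : Fintype.card (g.rootSet F') ≤ Fintype.card F' :=
    Fintype.card_le_of_injective _ Subtype.val_injective
  have hN : N < p ^ e := lt_of_lt_of_le (Nat.lt_two_pow_self (n := N))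
    (le_trans (Nat.pow_le_pow_right (by norm_num) (by omega)) (Nat.pow_le_pow_left hp2 e))
  omega

lemma truncate_one {X : Type} [Fintype X] [DecidableEq X] (h : Finset X → ℝ)
    (hr : IsRepresentable h) (h1 : 1 ≤ h Finset.univ) :
    IsRepresentable fun A => min (h A) (h Finset.univ - 1) := by
  classical
  obtain ⟨r⟩ := hr
  letI := r.fieldF; letI := r.fintypeF; letI := r.addCommGroupW; letI := r.moduleW
  letI := r.finiteDimensionalW
  obtain ⟨F', iF1, iF2, iF3, hF'⟩ := exists_big_ext r.F (Fintype.card (Finset X))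
  set W' := F' ⊗[r.F] r.W with hW'
  haveI : Module.Finite F' W' := Module.Finite.base_change r.F F' r.W
  set V' : X → Submodule F' W' := fun i => (r.V i).baseChange F' with hV'
  have hsup : ∀ A : Finset X, A.sup V' = (A.sup r.V).baseChange F' :=
    fun A => myBaseChange_finsetSup A r.V
  have hrank : ∀ A : Finset X, h A = (finrank F' ↥(A.sup V') : ℝ) := by
    intro A
    rw [hsup A, myBaseChange_finrank, r.rank_eq A]
  set Vu : Submodule F' W' := Finset.univ.sup V' with hVu
  -- the generic vector
  have hgen : ∃ x : W', x ∈ Vu ∧ ∀ A : Finset X, A.sup V' ≠ Vu → x ∉ A.sup V' := by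
    set T : Finset (Submodule F' ↥Vu) :=
      Finset.image (fun A : Finset X => Submodule.comap Vu.subtype (A.sup V'))
        (Finset.univ.filter fun A : Finset X => A.sup V' ≠ Vu) with hT
    have hTne : ∀ U ∈ T, U ≠ ⊤ := by
      intro U hU
      rw [hT, Finset.mem_image] at hU
      obtain ⟨A, hA, rfl⟩ := hU
      rw [Finset.mem_filter] at hA
      intro htop
      rw [Submodule.comap_subtype_eq_top] at htop
      exact hA.2 (le_antisymm (Finset.sup_mono (Finset.subset_univ A)) htop)
    have hTcard : T.card < Fintype.card F' := by
      calc T.card ≤ (Finset.univ.filter fun A : Finset X => A.sup V' ≠ Vu).card :=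
            Finset.card_image_le
        _ ≤ Fintype.card (Finset X) :=
            le_trans (Finset.card_filter_le _ _) (le_of_eq Finset.card_univ)
        _ < Fintype.card F' := hF'
    obtain ⟨x, hx⟩ := not_covered (F := F') (V := ↥Vu) T hTne hTcard
    refine ⟨(x : W'), x.2, fun A hA => fun hmem => ?_⟩
    exact hx _ (Finset.mem_image.mpr ⟨A, Finset.mem_filter.mpr ⟨Finset.mem_univ A, hA⟩, rfl⟩)
      hmem
  obtain ⟨x, hxVu, hxgen⟩ := hgen
  have hx0 : x ≠ 0 := by
    intro h0
    have hbot : (∅ : Finset X).sup V' ≠ Vu := by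
      rw [Finset.sup_empty]
      intro hb
      have := hrank Finset.univ
      rw [← hVu, ← hb] at this
      simp only [finrank_bot, Nat.cast_zero] at this
      rw [this] at h1; linarith
    exact hxgen ∅ hbot (by rw [Finset.sup_empty, h0]; exact Submodule.zero_mem _)
  set L : Submodule F' W' := Submodule.span F' {x} with hL
  set V'' : X → Submodule F' (W' ⧸ L) := fun i => (V' i).map L.mkQ with hV''
  have hsup2 : ∀ A : Finset X, A.sup V'' = (A.sup V').map L.mkQ :=
    fun A => (map_finsetSup L.mkQ A V').symm
  -- rank computation
  have key : ∀ A : Finset X,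
      min (h A) (h Finset.univ - 1) = (finrank F' ↥(A.sup V'') : ℝ) := by
    intro A
    set U : Submodule F' W' := A.sup V' with hU
    set g : ↥U →ₗ[F'] W' ⧸ L := L.mkQ.comp U.subtype with hg
    have hrange : LinearMap.range g = U.map L.mkQ := by
      rw [hg, LinearMap.range_comp, Submodule.range_subtype]
    have hker : LinearMap.ker g = Submodule.comap U.subtype L := by
      rw [hg, LinearMap.ker_comp, Submodule.ker_mkQ]
    have hrank_nullity := LinearMap.finrank_range_add_finrank_ker (K := F') (V := ↥U) g
    rw [hrange, hker] at hrank_nullity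
    have hAle : U ≤ Vu := Finset.sup_mono (Finset.subset_univ A)
    rw [hsup2 A, ← hU]
    by_cases hUVu : U = Vu
    · -- rank drops by one
      have hLU : L ≤ U := by
        rw [hL, Submodule.span_le, Set.singleton_subset_iff]
        rw [hUVu]; exact hxVu
      have hkeq : finrank F' ↥(Submodule.comap U.subtype L) = 1 := by
        rw [LinearEquiv.finrank_eq (Submodule.comapSubtypeEquivOfLe hLU), hL]
        exact finrank_span_singleton hx0
      have hAeq : h A = h Finset.univ := by
        rw [hrank A, hrank Finset.univ, ← hU, ← hVu, hUVu]
      rw [min_eq_right (by rw [hAeq]; linarith)]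
      rw [hkeq] at hrank_nullity
      have hmap : finrank F' ↥(Submodule.map L.mkQ U) = finrank F' ↥U - 1 := by omega
      have h1' : 1 ≤ finrank F' ↥U := by
        have h2 := hrank Finset.univ
        rw [← hVu, ← hUVu] at h2
        rw [h2] at h1; exact_mod_cast h1
      rw [hrank Finset.univ, ← hVu, ← hUVu, hmap]
      push_cast [Nat.cast_sub h1']
      ring
    · -- rank unchanged
      have hkbot : Submodule.comap U.subtype L = ⊥ := by
        rw [Submodule.eq_bot_iff]
        rintro ⟨u, hu⟩ huL
        simp only [Submodule.mem_comap, Submodule.subtype_apply] at huL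
        rw [hL, Submodule.mem_span_singleton] at huL
        obtain ⟨a, ha⟩ := huL
        rcases eq_or_ne a 0 with rfl | ha0
        · simp only [zero_smul] at ha
          simp [← ha]
        · exfalso
          apply hxgen A hUVu
          have : x = a⁻¹ • u := by rw [← ha, smul_smul, inv_mul_cancel₀ ha0, one_smul]
          rw [this]
          exact Submodule.smul_mem _ _ hu
      rw [hkbot] at hrank_nullity
      simp only [finrank_bot, add_zero] at hrank_nullity
      have hlt : finrank F' ↥U < finrank F' ↥Vu := by
        rcases lt_or_eq_of_le (Submodule.finrank_mono hAle) with hlt | heq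
        · exact hlt
        · exact absurd (Submodule.eq_of_le_of_finrank_le hAle heq.ge) hUVu
      have hle1 : h A ≤ h Finset.univ - 1 := by
        rw [hrank A, hrank Finset.univ, ← hU, ← hVu]
        have : (finrank F' ↥U : ℝ) + 1 ≤ (finrank F' ↥Vu : ℝ) := by exact_mod_cast hlt
        linarith
      rw [min_eq_left hle1, hrank A, ← hU, hrank_nullity]
  exact ⟨{ F := F'
           W := (W' ⧸ L)
           V := V''
           rank_eq := key }⟩

lemma trunc_rep {X : Type} [Fintype X] [DecidableEq X] :
    ∀ (N : ℕ) (h : Finset X → ℝ), IsRepresentable h → h Finset.univ = (N : ℝ) →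
      ∀ k : ℕ, IsRepresentable (fun A => min (h A) (k : ℝ)) := by
  intro N
  induction N using Nat.strong_induction_on with
  | _ N ih =>
    intro h hr hN k
    obtain ⟨r⟩ := hr
    by_cases hkN : N ≤ k
    · have heq : (fun A : Finset X => min (h A) (k : ℝ)) = h := by
        funext A
        exact min_eq_left (le_trans (rep_mono r (Finset.subset_univ A))
          (by rw [hN]; exact_mod_cast hkN))
      rw [heq]; exact ⟨r⟩
    · push_neg at hkN
      have hN1 : 1 ≤ N := by omega
      have h1 : 1 ≤ h Finset.univ := by
        rw [hN]; exact_mod_cast hN1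
      have htr := truncate_one h ⟨r⟩ h1
      have huniv : (fun A : Finset X => min (h A) (h Finset.univ - 1)) Finset.univ
          = ((N - 1 : ℕ) : ℝ) := by
        simp only
        rw [min_eq_right (by linarith), hN]
        push_cast [Nat.cast_sub hN1]
        ring
      have hres := ih (N - 1) (by omega) _ htr huniv k
      have heq2 : (fun A : Finset X => min ((fun B : Finset X =>
          min (h B) (h Finset.univ - 1)) A) (k : ℝ))
          = fun A : Finset X => min (h A) (k : ℝ) := by
        funext A
        simp only
        rw [min_assoc]
        congr 1
        apply min_eq_right
        rw [hN]
        have hk1 : (k : ℝ) ≤ (N : ℝ) - 1 := by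
          have : (k : ℝ) + 1 ≤ (N : ℝ) := by exact_mod_cast hkN
          linarith
        linarith
      rwa [heq2] at hres

lemma trunc_rep' {X : Type} [Fintype X] [DecidableEq X] (h : Finset X → ℝ)
    (hr : IsRepresentable h) (k : ℕ) :
    IsRepresentable (fun A => min (h A) (k : ℝ)) := by
  obtain ⟨r⟩ := hr
  letI := r.fieldF; letI := r.addCommGroupW; letI := r.moduleW; letI := r.finiteDimensionalW
  exact trunc_rep (finrank r.F ↥(Finset.univ.sup r.V)) h ⟨r⟩ (r.rank_eq Finset.univ) k

end AuxLemmas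

/-- if representable polymatroids `(X, h_i)` and positive reals `c_i`
satisfy `c_i·h_i → h_0` coordinatewise (with `h_0` a rank function), and
`0 ≤ ε ≤ h_0(X)`, then setting `g_i(A) := min(c_i h_i(A), c_i h_i(X) − ε)` and
`g_0(A) := min(h_0(A), h_0(X) − ε)`, we have `g_i → g_0` coordinatewise and `g_0` is
almost representable. -/
theorem limit_of_perturbations {X : Type} [Fintype X] [DecidableEq X]
    (h : ℕ → Finset X → ℝ) (c : ℕ → ℝ) (h0 : Finset X → ℝ)
    (hpoly : ∀ i, IsPolymatroid (h i)) (hrep : ∀ i, IsRepresentable (h i))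
    (hc : ∀ i, 0 < c i)
    (hlim : ∀ A : Finset X, Tendsto (fun i => c i * h i A) atTop (𝓝 (h0 A)))
    (h0poly : IsPolymatroid h0)
    (ε : ℝ) (hε0 : 0 ≤ ε) (hε1 : ε ≤ h0 Finset.univ) :
    (∀ A : Finset X,
      Tendsto (fun i => min (c i * h i A) (c i * h i Finset.univ - ε)) atTop
        (𝓝 (min (h0 A) (h0 Finset.univ - ε))))
    ∧ AlmostRepresentable (fun A => min (h0 A) (h0 Finset.univ - ε)) := by
  constructor
  · intro A
    exact Filter.Tendsto.min (hlim A) ((hlim Finset.univ).sub tendsto_const_nhds)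
  · set T : ℝ := h0 Finset.univ - ε with hT
    have hT0 : 0 ≤ T := by rw [hT]; linarith
    set M : ℕ → ℕ := fun i => (i + 1) * (⌈c i⌉₊ + 1) with hM
    have hM0 : ∀ i, 0 < (M i : ℝ) := by
      intro i; rw [hM]; positivity
    set k : ℕ → ℕ := fun i => ⌊(M i : ℝ) * T / c i⌋₊ with hk
    set t : ℕ → ℝ := fun i => c i / M i * k i with ht
    have htle : ∀ i, t i ≤ T := by
      intro i
      have hci := hc i
      have hMi := hM0 i
      have h1 : (k i : ℝ) ≤ (M i : ℝ) * T / c i :=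
        Nat.floor_le (div_nonneg (mul_nonneg hMi.le hT0) hci.le)
      have h2 : c i / M i * ((M i : ℝ) * T / c i) = T := by
        field_simp
      calc t i ≤ c i / M i * ((M i : ℝ) * T / c i) :=
            mul_le_mul_of_nonneg_left h1 (div_nonneg hci.le hMi.le)
        _ = T := h2
    have htge : ∀ i, T - 1 / (i + 1) ≤ t i := by
      intro i
      have hci := hc i
      have hMi := hM0 i
      have h1 : (M i : ℝ) * T / c i < k i + 1 := Nat.lt_floor_add_one _
      have h2 : T < c i / M i * (k i + 1) := by
        have hmul := mul_lt_mul_of_pos_left h1 (div_pos hci hMi)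
        calc T = c i / M i * ((M i : ℝ) * T / c i) := by field_simp
          _ < c i / M i * (k i + 1) := hmul
      have h3 : c i / M i ≤ 1 / (i + 1) := by
        rw [div_le_div_iff₀ (hM0 i) (by positivity)]
        have hcle : c i ≤ (⌈c i⌉₊ : ℝ) + 1 := le_trans (Nat.le_ceil _) (by linarith)
        calc c i * (i + 1) ≤ ((⌈c i⌉₊ : ℝ) + 1) * (i + 1) := by
              apply mul_le_mul_of_nonneg_right hcle (by positivity)
          _ = 1 * (M i : ℝ) := by rw [hM]; push_cast; ring
      have : T < t i + 1 / (i + 1) := by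
        rw [ht]
        simp only
        calc T < c i / M i * (k i + 1) := h2
          _ = c i / M i * k i + c i / M i := by ring
          _ ≤ c i / M i * k i + 1 / (i + 1) := by linarith
      linarith
    have htlim : Tendsto t atTop (𝓝 T) := by
      apply tendsto_of_tendsto_of_tendsto_of_le_of_le
        (g := fun i : ℕ => T - 1 / (i + 1)) (h := fun _ : ℕ => T) _ _ htge htle
      · have := tendsto_one_div_add_atTop_nhds_zero_nat (𝕜 := ℝ)
        have h2 := (tendsto_const_nhds (x := T) (f := atTop (α := ℕ))).sub this
        simpa using h2
      · exact tendsto_const_nhds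
    refine ⟨fun i => fun A => min ((M i : ℝ) * h i A) (k i : ℝ),
            fun i => c i / M i, ?_, ?_, ?_⟩
    · intro i
      obtain ⟨r⟩ := hrep i
      exact trunc_rep' _ (rep_nsmul r (M i)) (k i)
    · intro i
      exact div_pos (hc i) (hM0 i)
    · intro A
      have hfun : ∀ i, c i / M i * min ((M i : ℝ) * h i A) (k i : ℝ)
          = min (c i * h i A) (t i) := by
        intro i
        rw [mul_min_of_nonneg _ _ (div_nonneg (hc i).le (hM0 i).le)]
        congr 1
        field_simp [(hM0 i).ne']
      simp only [hfun]
      exact Filter.Tendsto.min (hlim A) htlim
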